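/- Consider the saddle-point (KKT) matrix K with block structure: rows/columns indexed by (x, r^p, r^m, λ^p, λ^m), where K has blocks G^T and H^T in the x-row against the multiplier columns, ℓ^p_{rr} and ℓ^m_{rr} (positive definite) on the diagonal for r^p, r^m, and −Q^{1/2}, −R^{1/2} coupling residuals to multipliers, with G invertible. Then K is invertible if and only if the Schur complement S = H G^{-1} Q^{1/2} (ℓ^p_{rr})^{-1} Q^{T/2} G^{-T} H^T + R^{1/2} (ℓ^m_{rr})^{-1} R^{T/2} is invertible. -/
import Mathlib


open Matrix

private lemma sum_elim_ne_zero_right {α β : Type*} {f : α → ℝ} {g : β → ℝ} (hg : g ≠ 0) :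
    Sum.elim f g ≠ 0 := by
  intro h
  apply hg
  funext b
  exact congrFun h (Sum.inr b)

private lemma mulVec_inv_cancel {n : Type*} [Fintype n] [DecidableEq n]
    {A : Matrix n n ℝ} (hA : IsUnit A.det) (u : n → ℝ) : A *ᵥ (A⁻¹ *ᵥ u) = u := by
  rw [Matrix.mulVec_mulVec, Matrix.mul_nonsing_inv _ hA, Matrix.one_mulVec]

private lemma inv_mulVec_cancel {n : Type*} [Fintype n] [DecidableEq n]
    {A : Matrix n n ℝ} (hA : IsUnit A.det) (u : n → ℝ) : A⁻¹ *ᵥ (A *ᵥ u) = u := by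
  rw [Matrix.mulVec_mulVec, Matrix.nonsing_inv_mul _ hA, Matrix.one_mulVec]

/-- The KKT saddle-point matrix of the singular smoother Lagrangian
(variables ordered `x, rᵖ, rᵐ, λᵖ, λᵐ`) is invertible iff the Schur complement
`S = H G⁻¹ Q^{1/2} (ℓᵖ_rr)⁻¹ Q^{T/2} G⁻ᵀ Hᵀ + R^{1/2} (ℓᵐ_rr)⁻¹ R^{T/2}` is invertible. -/
theorem kkt_invertible_iff_schur
    {d p : ℕ}
    (G Qh Ap : Matrix (Fin d) (Fin d) ℝ)
    (H : Matrix (Fin p) (Fin d) ℝ)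
    (Rh Am : Matrix (Fin p) (Fin p) ℝ)
    (hAp : Ap.PosDef) (hAm : Am.PosDef)
    (hG : IsUnit G.det)
    (K : Matrix (Fin d ⊕ Fin d ⊕ Fin p ⊕ Fin d ⊕ Fin p)
               (Fin d ⊕ Fin d ⊕ Fin p ⊕ Fin d ⊕ Fin p) ℝ)
    (hK : K = Matrix.of fun i j =>
      match i, j with
      | Sum.inl a, Sum.inr (Sum.inr (Sum.inr (Sum.inl b))) => Gᵀ a b
      | Sum.inl a, Sum.inr (Sum.inr (Sum.inr (Sum.inr b))) => Hᵀ a b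
      | Sum.inr (Sum.inl a), Sum.inr (Sum.inl b) => Ap a b
      | Sum.inr (Sum.inl a), Sum.inr (Sum.inr (Sum.inr (Sum.inl b))) => -Qhᵀ a b
      | Sum.inr (Sum.inr (Sum.inl a)), Sum.inr (Sum.inr (Sum.inl b)) => Am a b
      | Sum.inr (Sum.inr (Sum.inl a)), Sum.inr (Sum.inr (Sum.inr (Sum.inr b))) => -Rhᵀ a b
      | Sum.inr (Sum.inr (Sum.inr (Sum.inl a))), Sum.inl b => G a b
      | Sum.inr (Sum.inr (Sum.inr (Sum.inl a))), Sum.inr (Sum.inl b) => -Qh a b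
      | Sum.inr (Sum.inr (Sum.inr (Sum.inr a))), Sum.inl b => H a b
      | Sum.inr (Sum.inr (Sum.inr (Sum.inr a))), Sum.inr (Sum.inr (Sum.inl b)) => -Rh a b
      | _, _ => 0) :
    IsUnit K ↔
      IsUnit (H * G⁻¹ * Qh * Ap⁻¹ * Qhᵀ * (G⁻¹)ᵀ * Hᵀ + Rh * Am⁻¹ * Rhᵀ) := by
  set S : Matrix (Fin p) (Fin p) ℝ :=
    H * G⁻¹ * Qh * Ap⁻¹ * Qhᵀ * (G⁻¹)ᵀ * Hᵀ + Rh * Am⁻¹ * Rhᵀ with hS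
  have hApU : IsUnit Ap.det := isUnit_iff_ne_zero.mpr hAp.det_pos.ne'
  have hAmU : IsUnit Am.det := isUnit_iff_ne_zero.mpr hAm.det_pos.ne'
  have hGT : IsUnit Gᵀ.det := by rwa [Matrix.det_transpose]
  -- key mulVec computation
  have hmul : ∀ (x rp lp : Fin d → ℝ) (rm lm : Fin p → ℝ),
      K *ᵥ (Sum.elim x (Sum.elim rp (Sum.elim rm (Sum.elim lp lm)))) =
      Sum.elim (Gᵀ *ᵥ lp + Hᵀ *ᵥ lm)
        (Sum.elim (Ap *ᵥ rp - Qhᵀ *ᵥ lp)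
          (Sum.elim (Am *ᵥ rm - Rhᵀ *ᵥ lm)
            (Sum.elim (G *ᵥ x - Qh *ᵥ rp) (H *ᵥ x - Rh *ᵥ rm)))) := by
    intro x rp lp rm lm
    subst hK
    ext i
    rcases i with a | a | a | a | a <;>
      simp [Matrix.mulVec, dotProduct, Fintype.sum_sum_type, sub_eq_add_neg,
        Finset.sum_add_distrib, neg_mul, Finset.sum_neg_distrib]
  -- S action in nested mulVec form
  have hSv : ∀ w : Fin p → ℝ, S *ᵥ w =
      H *ᵥ (G⁻¹ *ᵥ (Qh *ᵥ (Ap⁻¹ *ᵥ (Qhᵀ *ᵥ (Gᵀ⁻¹ *ᵥ (Hᵀ *ᵥ w)))))) +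
        Rh *ᵥ (Am⁻¹ *ᵥ (Rhᵀ *ᵥ w)) := by
    intro w
    simp only [hS, Matrix.add_mulVec, Matrix.transpose_nonsing_inv, ← Matrix.mulVec_mulVec]
  -- kernel equivalence
  have hker : (∃ v, v ≠ 0 ∧ K *ᵥ v = 0) ↔ (∃ w, w ≠ 0 ∧ S *ᵥ w = 0) := by
    constructor
    · rintro ⟨v, hv0, hv⟩
      set x : Fin d → ℝ := fun a => v (Sum.inl a)
      set rp : Fin d → ℝ := fun a => v (Sum.inr (Sum.inl a))
      set rm : Fin p → ℝ := fun a => v (Sum.inr (Sum.inr (Sum.inl a)))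
      set lp : Fin d → ℝ := fun a => v (Sum.inr (Sum.inr (Sum.inr (Sum.inl a))))
      set lm : Fin p → ℝ := fun a => v (Sum.inr (Sum.inr (Sum.inr (Sum.inr a))))
      have hvdec : v = Sum.elim x (Sum.elim rp (Sum.elim rm (Sum.elim lp lm))) := by
        funext i; rcases i with a | a | a | a | a <;> rfl
      rw [hvdec, hmul] at hv
      have E1 : Gᵀ *ᵥ lp + Hᵀ *ᵥ lm = 0 := by funext a; exact congrFun hv (Sum.inl a)
      have E2 : Ap *ᵥ rp - Qhᵀ *ᵥ lp = 0 := by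
        funext a; exact congrFun hv (Sum.inr (Sum.inl a))
      have E3 : Am *ᵥ rm - Rhᵀ *ᵥ lm = 0 := by
        funext a; exact congrFun hv (Sum.inr (Sum.inr (Sum.inl a)))
      have E4 : G *ᵥ x - Qh *ᵥ rp = 0 := by
        funext a; exact congrFun hv (Sum.inr (Sum.inr (Sum.inr (Sum.inl a))))
      have E5 : H *ᵥ x - Rh *ᵥ rm = 0 := by
        funext a; exact congrFun hv (Sum.inr (Sum.inr (Sum.inr (Sum.inr a))))
      have h1 : Gᵀ *ᵥ lp = -(Hᵀ *ᵥ lm) := by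
        rw [← sub_eq_zero]; simpa [sub_neg_eq_add] using E1
      have hlp : lp = -(Gᵀ⁻¹ *ᵥ (Hᵀ *ᵥ lm)) :=
        calc lp = Gᵀ⁻¹ *ᵥ (Gᵀ *ᵥ lp) := (inv_mulVec_cancel hGT lp).symm
          _ = Gᵀ⁻¹ *ᵥ (-(Hᵀ *ᵥ lm)) := by rw [h1]
          _ = -(Gᵀ⁻¹ *ᵥ (Hᵀ *ᵥ lm)) := Matrix.mulVec_neg _ _
      have hrp : rp = Ap⁻¹ *ᵥ (Qhᵀ *ᵥ lp) :=
        calc rp = Ap⁻¹ *ᵥ (Ap *ᵥ rp) := (inv_mulVec_cancel hApU rp).symm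
          _ = _ := by rw [sub_eq_zero.mp E2]
      have hrm : rm = Am⁻¹ *ᵥ (Rhᵀ *ᵥ lm) :=
        calc rm = Am⁻¹ *ᵥ (Am *ᵥ rm) := (inv_mulVec_cancel hAmU rm).symm
          _ = _ := by rw [sub_eq_zero.mp E3]
      have hx : x = G⁻¹ *ᵥ (Qh *ᵥ rp) :=
        calc x = G⁻¹ *ᵥ (G *ᵥ x) := (inv_mulVec_cancel hG x).symm
          _ = _ := by rw [sub_eq_zero.mp E4]
      refine ⟨lm, ?_, ?_⟩
      · intro hlm0
        apply hv0
        have hlp0 : lp = 0 := by simp [hlp, hlm0]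
        have hrp0 : rp = 0 := by simp [hrp, hlp0]
        have hrm0 : rm = 0 := by simp [hrm, hlm0]
        have hx0 : x = 0 := by simp [hx, hrp0]
        rw [hvdec]
        funext i
        rcases i with a | a | a | a | a <;>
          simp [hlm0, hlp0, hrp0, hrm0, hx0]
      · have key : S *ᵥ lm = -(H *ᵥ x) + Rh *ᵥ rm := by
          rw [hSv lm]
          have e : Gᵀ⁻¹ *ᵥ (Hᵀ *ᵥ lm) = -lp := by rw [hlp, neg_neg]
          rw [e]
          simp only [Matrix.mulVec_neg]
          rw [← hrp, ← hx, ← hrm]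
        rw [key, sub_eq_zero.mp E5, neg_add_cancel]
    · rintro ⟨w, hw0, hw⟩
      set lp : Fin d → ℝ := -(Gᵀ⁻¹ *ᵥ (Hᵀ *ᵥ w)) with hlp
      set rp : Fin d → ℝ := Ap⁻¹ *ᵥ (Qhᵀ *ᵥ lp) with hrp
      set rm : Fin p → ℝ := Am⁻¹ *ᵥ (Rhᵀ *ᵥ w) with hrm
      set x : Fin d → ℝ := G⁻¹ *ᵥ (Qh *ᵥ rp) with hx
      refine ⟨Sum.elim x (Sum.elim rp (Sum.elim rm (Sum.elim lp w))),
        sum_elim_ne_zero_right (sum_elim_ne_zero_right (sum_elim_ne_zero_right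
          (sum_elim_ne_zero_right hw0))), ?_⟩
      rw [hmul]
      have E1 : Gᵀ *ᵥ lp + Hᵀ *ᵥ w = 0 := by
        rw [hlp, Matrix.mulVec_neg, mulVec_inv_cancel hGT, neg_add_cancel]
      have E2 : Ap *ᵥ rp - Qhᵀ *ᵥ lp = 0 := by
        rw [hrp, mulVec_inv_cancel hApU, sub_self]
      have E3 : Am *ᵥ rm - Rhᵀ *ᵥ w = 0 := by
        rw [hrm, mulVec_inv_cancel hAmU, sub_self]
      have E4 : G *ᵥ x - Qh *ᵥ rp = 0 := by
        rw [hx, mulVec_inv_cancel hG, sub_self]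
      have E5 : H *ᵥ x - Rh *ᵥ rm = 0 := by
        have key : S *ᵥ w = -(H *ᵥ x) + Rh *ᵥ rm := by
          rw [hSv w]
          have e : Gᵀ⁻¹ *ᵥ (Hᵀ *ᵥ w) = -lp := by rw [hlp, neg_neg]
          rw [e]
          simp only [Matrix.mulVec_neg, ← hrp, ← hx, ← hrm]
        rw [hw] at key
        exact sub_eq_zero.mpr (neg_add_eq_zero.mp key.symm)
      rw [E1, E2, E3, E4, E5]
      funext i; rcases i with a | a | a | a | a <;> rfl
  have hdet : K.det = 0 ↔ S.det = 0 := by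
    rw [← Matrix.exists_mulVec_eq_zero_iff, ← Matrix.exists_mulVec_eq_zero_iff]
    exact hker
  rw [Matrix.isUnit_iff_isUnit_det, Matrix.isUnit_iff_isUnit_det,
    isUnit_iff_ne_zero, isUnit_iff_ne_zero]
  exact not_congr hdet
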